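/- For positive integers m, k and all p ∈ (0,1], Λ_{m,k}(p) equals p times the maximum of Π_{i=1}^{k} √(ln(e·xᵢ)) over all reals x₁,...,x_k ≥ 1 satisfying x₁x₂⋯xᵢ ≤ m^{i-1}/p for each i = 1,...,k. -/

import Mathlib

open Real

/-- The function `Λ_{m,k}` from the paper (extended by `0` to `p ≤ 0`). -/
noncomputable def Lam (m k : ℕ) (p : ℝ) : ℝ :=
  if p ≤ 0 then 0
  else if p ≤ 1 / (m : ℝ) then
    p * ((1 / (k : ℝ)) * Real.log (Real.exp k * (m : ℝ) ^ (k - 1) / p)) ^ ((k : ℝ) / 2)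
  else
    p * Real.sqrt (Real.log (Real.exp 1 / p)) *
      Real.log (Real.exp 1 * m) ^ (((k : ℝ) - 1) / 2)

private lemma log_le_lin {a y : ℝ} (ha : 0 < a) (hy : 0 < y) :
    Real.log y ≤ Real.log a + (y - a) / a := by
  have h := Real.log_le_sub_one_of_pos (show (0:ℝ) < y / a by positivity)
  rw [Real.log_div (ne_of_gt hy) (ne_of_gt ha)] at h
  have h2 : y / a - 1 = (y - a) / a := by field_simp
  linarith [h2 ▸ h]

private lemma prod_sqrt_le {k : ℕ} (y : Fin k → ℝ) (hy : ∀ i, 0 < y i) {t : ℝ}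
    (ht : 0 ≤ t) (h : ∏ i, y i ≤ t ^ 2) : (∏ i, Real.sqrt (y i)) ≤ t := by
  have h1 : (∏ i, Real.sqrt (y i)) ^ 2 = ∏ i, y i := by
    rw [← Finset.prod_pow]
    exact Finset.prod_congr rfl fun i _ => Real.sq_sqrt (hy i).le
  have h0 : 0 ≤ ∏ i, Real.sqrt (y i) := Finset.prod_nonneg fun i _ => Real.sqrt_nonneg _
  nlinarith [h1, h, sq_nonneg ((∏ i, Real.sqrt (y i)) - t)]

private lemma sqrt_pow_eq_rpow {a : ℝ} (ha : 0 ≤ a) (n : ℕ) :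
    Real.sqrt a ^ n = a ^ ((n : ℝ) / 2) := by
  rw [Real.sqrt_eq_rpow, ← Real.rpow_natCast (a ^ (1 / (2:ℝ))) n, ← Real.rpow_mul ha]
  congr 1
  ring

theorem Lam_opt (m k : ℕ) (hm : 1 ≤ m) (hk : 1 ≤ k) (p : ℝ) (hp : p ∈ Set.Ioc (0 : ℝ) 1) :
    ∃ r : ℝ,
      IsGreatest {r : ℝ | ∃ x : Fin k → ℝ, (∀ i, 1 ≤ x i) ∧
          (∀ i : Fin k, ∏ j ∈ Finset.Iic i, x j ≤ (m : ℝ) ^ (i : ℕ) / p) ∧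
          r = ∏ i, Real.sqrt (Real.log (Real.exp 1 * x i))} r ∧
        Lam m k p = p * r := by
  obtain ⟨n, rfl⟩ : ∃ n, k = n + 1 := ⟨k - 1, by omega⟩
  obtain ⟨hp0, hp1⟩ := hp
  have hm0 : (0:ℝ) < m := by exact_mod_cast hm
  have hm1 : (1:ℝ) ≤ m := by exact_mod_cast hm
  set lm := Real.log m with hlm
  set lp := Real.log p with hlp
  have hlm0 : 0 ≤ lm := Real.log_nonneg hm1
  have hlp0 : lp ≤ 0 := Real.log_nonpos hp0.le hp1
  have hIic_last : Finset.Iic (Fin.last n) = (Finset.univ : Finset (Fin (n+1))) := by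
    apply Finset.eq_univ_of_forall
    intro j
    simp [Finset.mem_Iic, Fin.le_def, Fin.last]
    omega
  by_cases hcase : p ≤ 1 / m
  · -- Case 1 : p ≤ 1/m
    have hml : lm ≤ -lp := by
      have h1 : Real.log p ≤ Real.log (1 / m) := Real.log_le_log hp0 hcase
      rw [one_div, Real.log_inv] at h1
      linarith
    set c := ((n : ℝ) * lm - lp) / (n + 1) with hc
    have hn1 : (0:ℝ) < (n:ℝ) + 1 := by positivity
    have hc0 : 0 ≤ c := by
      apply div_nonneg _ hn1.le
      have : 0 ≤ (n:ℝ) * lm := by positivity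
      linarith
    set a := 1 + c with ha
    have ha0 : (0:ℝ) < a := by linarith
    refine ⟨Real.sqrt a ^ (n + 1), ⟨⟨fun _ => Real.exp c, ?_, ?_, ?_⟩, ?_⟩, ?_⟩
    · intro i
      exact Real.one_le_exp hc0
    · intro i
      have hik : ((i:ℕ):ℝ) ≤ (n:ℝ) := by
        have : (i:ℕ) ≤ n := by omega
        exact_mod_cast this
      have key : (((i:ℕ):ℝ) + 1) * c ≤ ((i:ℕ):ℝ) * lm - lp := by
        rw [hc, ← sub_nonneg]
        have h1 : (((i:ℕ):ℝ) * lm - lp) - (((i:ℕ):ℝ) + 1) * (((n : ℝ) * lm - lp) / (n + 1))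
            = (((n:ℝ) - i) * (-lp - lm)) / (n + 1) := by
          field_simp
          ring
        rw [h1]
        apply div_nonneg _ hn1.le
        exact mul_nonneg (by linarith) (by linarith)
      calc ∏ j ∈ Finset.Iic i, Real.exp c = Real.exp c ^ (Finset.Iic i).card := by
            rw [Finset.prod_const]
        _ = Real.exp ((((i:ℕ):ℝ) + 1) * c) := by
            rw [Fin.card_Iic, ← Real.exp_nat_mul]
            push_cast
            ring_nf
        _ ≤ Real.exp (((i:ℕ):ℝ) * lm - lp) := Real.exp_le_exp.2 key
        _ = (m:ℝ) ^ (i:ℕ) / p := by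
            rw [Real.exp_sub, ← Real.log_pow, Real.exp_log (by positivity), Real.exp_log hp0]
    · simp only [← Real.exp_add, Real.log_exp]
      rw [Finset.prod_const, Finset.card_univ, Fintype.card_fin]
    · rintro r ⟨x, hx1, hxc, rfl⟩
      have hx0 : ∀ i, 0 < x i := fun i => lt_of_lt_of_le one_pos (hx1 i)
      set y : Fin (n+1) → ℝ := fun i => Real.log (Real.exp 1 * x i) with hy
      have hy_eq : ∀ i, y i = 1 + Real.log (x i) := by
        intro i
        rw [hy]
        simp only
        rw [Real.log_mul (Real.exp_ne_zero 1) (hx0 i).ne', Real.log_exp]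
      have hy1 : ∀ i, 1 ≤ y i := fun i => by
        rw [hy_eq i]; linarith [Real.log_nonneg (hx1 i)]
      have hy0 : ∀ i, 0 < y i := fun i => lt_of_lt_of_le one_pos (hy1 i)
      have hlast : ∑ i, Real.log (x i) ≤ (n:ℝ) * lm - lp := by
        have h := hxc (Fin.last n)
        rw [hIic_last] at h
        have hprod : 0 < ∏ i, x i := Finset.prod_pos fun i _ => hx0 i
        have h2 := Real.log_le_log hprod h
        rw [Real.log_prod (fun i _ => (hx0 i).ne'),
          Real.log_div (by positivity) hp0.ne', Real.log_pow] at h2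
        simpa [Fin.last] using h2
      have hsum : ∑ i, y i ≤ ((n:ℝ) + 1) * a := by
        have h1 : ∑ i, y i = ((n:ℝ) + 1) + ∑ i, Real.log (x i) := by
          simp only [hy_eq]
          rw [Finset.sum_add_distrib, Finset.sum_const, Finset.card_univ, Fintype.card_fin,
            nsmul_eq_mul]
          push_cast
          ring
        have h2 : ((n:ℝ) + 1) * a = ((n:ℝ) + 1) + ((n:ℝ) * lm - lp) := by
          rw [ha, hc]
          field_simp
        linarith
      have hlog : ∑ i, Real.log (y i) ≤ ((n:ℝ) + 1) * Real.log a := by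
        have h1 : ∑ i, Real.log (y i) ≤ ∑ i, (Real.log a + (y i - a) / a) :=
          Finset.sum_le_sum fun i _ => log_le_lin ha0 (hy0 i)
        have h2 : ∑ i, (Real.log a + (y i - a) / a)
            = ((n:ℝ) + 1) * Real.log a + ((∑ i, y i) - ((n:ℝ) + 1) * a) / a := by
          rw [Finset.sum_add_distrib, Finset.sum_const, Finset.card_univ, Fintype.card_fin,
            nsmul_eq_mul, ← Finset.sum_div, Finset.sum_sub_distrib, Finset.sum_const,
            Finset.card_univ, Fintype.card_fin, nsmul_eq_mul]
          push_cast
          ring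
        have h3 : ((∑ i, y i) - ((n:ℝ) + 1) * a) / a ≤ 0 :=
          div_nonpos_of_nonpos_of_nonneg (by linarith) ha0.le
        linarith
      apply prod_sqrt_le y hy0 (pow_nonneg (Real.sqrt_nonneg a) (n+1))
      have hprody : ∏ i, y i = Real.exp (∑ i, Real.log (y i)) := by
        rw [Real.exp_sum]
        exact Finset.prod_congr rfl fun i _ => (Real.exp_log (hy0 i)).symm
      have ht2 : (Real.sqrt a ^ (n+1)) ^ 2 = a ^ (n+1) := by
        rw [← pow_mul, mul_comm, pow_mul, Real.sq_sqrt ha0.le]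
      rw [ht2, hprody]
      calc Real.exp (∑ i, Real.log (y i)) ≤ Real.exp (((n:ℝ) + 1) * Real.log a) :=
            Real.exp_le_exp.2 hlog
        _ = a ^ (n+1) := by
            rw [show ((n:ℝ) + 1) = ((n + 1 : ℕ) : ℝ) by push_cast; ring,
              Real.exp_nat_mul, Real.exp_log ha0]
    · rw [Lam, if_neg (not_le.2 hp0), if_pos hcase]
      have hlog : Real.log (Real.exp ((n+1 : ℕ):ℝ) * (m:ℝ) ^ (n + 1 - 1) / p)
          = ((n:ℝ) + 1) + (n:ℝ) * lm - lp := by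
        rw [Real.log_div (by positivity) hp0.ne',
          Real.log_mul (Real.exp_ne_zero _) (by positivity), Real.log_exp, Real.log_pow]
        push_cast
        ring
      rw [hlog]
      have h2 : (1 / ((n+1:ℕ):ℝ)) * (((n:ℝ) + 1) + (n:ℝ) * lm - lp) = a := by
        rw [ha, hc]
        push_cast
        field_simp
        ring
      rw [h2, sqrt_pow_eq_rpow ha0.le (n+1)]
  · -- Case 2 : 1/m < p
    push_neg at hcase
    have hml : -lm ≤ lp := by
      have h1 : Real.log (1 / m) ≤ Real.log p := Real.log_le_log (by positivity) hcase.le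
      rw [one_div, Real.log_inv] at h1
      linarith
    set a := 1 - lp with ha
    set b := 1 + lm with hb
    have ha1 : (1:ℝ) ≤ a := by linarith
    have hb1 : (1:ℝ) ≤ b := by linarith
    have ha0 : (0:ℝ) < a := by linarith
    have hb0 : (0:ℝ) < b := by linarith
    have hab : a ≤ b := by linarith
    set x : Fin (n+1) → ℝ := fun j => if j = 0 then 1 / p else (m:ℝ) with hxdef
    have hx1 : ∀ j, 1 ≤ x j := by
      intro j
      simp only [hxdef]
      by_cases hj : j = 0
      · rw [if_pos hj]
        exact one_le_one_div hp0 hp1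
      · rw [if_neg hj]; exact hm1
    have hlogx : ∀ j : Fin (n+1), Real.log (Real.exp 1 * x j) = if j = 0 then a else b := by
      intro j
      simp only [hxdef]
      by_cases hj : j = 0
      · rw [if_pos hj, if_pos hj, Real.log_mul (Real.exp_ne_zero 1) (by positivity),
          Real.log_exp, one_div, Real.log_inv, ha]
        ring
      · rw [if_neg hj, if_neg hj, Real.log_mul (Real.exp_ne_zero 1) hm0.ne',
          Real.log_exp, hb]
    refine ⟨Real.sqrt a * Real.sqrt b ^ n, ⟨⟨x, hx1, ?_, ?_⟩, ?_⟩, ?_⟩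
    · intro i
      have h0mem : (0 : Fin (n+1)) ∈ Finset.Iic i := Finset.mem_Iic.2 (Fin.zero_le i)
      rw [← Finset.mul_prod_erase _ _ h0mem]
      have hx00 : x 0 = 1 / p := by simp [hxdef]
      have herase : ∏ j ∈ (Finset.Iic i).erase 0, x j = (m:ℝ) ^ (i:ℕ) := by
        rw [Finset.prod_congr rfl (fun j hj => by
          simp only [hxdef]; exact if_neg (Finset.ne_of_mem_erase hj)),
          Finset.prod_const, Finset.card_erase_of_mem h0mem, Fin.card_Iic]
        simp
      rw [hx00, herase]
      have heq : (1/p) * (m:ℝ)^(i:ℕ) = (m:ℝ)^(i:ℕ)/p := by ring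
      rw [heq]
    · have h0mem : (0 : Fin (n+1)) ∈ (Finset.univ : Finset (Fin (n+1))) := Finset.mem_univ _
      rw [← Finset.mul_prod_erase _ _ h0mem, hlogx 0, if_pos rfl]
      congr 1
      rw [Finset.prod_congr rfl (fun j hj => by
        rw [hlogx j, if_neg (Finset.ne_of_mem_erase hj)]),
        Finset.prod_const, Finset.card_erase_of_mem h0mem, Finset.card_univ, Fintype.card_fin]
      simp
    · rintro r ⟨x', hx1', hxc', rfl⟩
      have hx0' : ∀ i, 0 < x' i := fun i => lt_of_lt_of_le one_pos (hx1' i)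
      set y : Fin (n+1) → ℝ := fun i => Real.log (Real.exp 1 * x' i) with hy
      have hy_eq : ∀ i, y i = 1 + Real.log (x' i) := by
        intro i
        rw [hy]
        simp only
        rw [Real.log_mul (Real.exp_ne_zero 1) (hx0' i).ne', Real.log_exp]
      have hy1 : ∀ i, 1 ≤ y i := fun i => by
        rw [hy_eq i]; linarith [Real.log_nonneg (hx1' i)]
      have hy0 : ∀ i, 0 < y i := fun i => lt_of_lt_of_le one_pos (hy1 i)
      have hy0a : y 0 ≤ a := by
        have h := hxc' 0
        have hIic0 : Finset.Iic (0 : Fin (n+1)) = {0} := by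
          ext j
          simp [Finset.mem_Iic, Fin.le_zero_iff]
        rw [hIic0, Finset.prod_singleton] at h
        simp only [Fin.val_zero, pow_zero] at h
        have h2 := Real.log_le_log (hx0' 0) h
        rw [Real.log_div one_ne_zero hp0.ne', Real.log_one] at h2
        rw [hy_eq 0, ha]
        linarith
      have hlast : ∑ i, Real.log (x' i) ≤ (n:ℝ) * lm - lp := by
        have h := hxc' (Fin.last n)
        rw [hIic_last] at h
        have hprod : 0 < ∏ i, x' i := Finset.prod_pos fun i _ => hx0' i
        have h2 := Real.log_le_log hprod h
        rw [Real.log_prod (fun i _ => (hx0' i).ne'),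
          Real.log_div (by positivity) hp0.ne', Real.log_pow] at h2
        simpa [Fin.last] using h2
      have hsum : ∑ i, y i ≤ a + (n:ℝ) * b := by
        have h1 : ∑ i, y i = ((n:ℝ) + 1) + ∑ i, Real.log (x' i) := by
          simp only [hy_eq]
          rw [Finset.sum_add_distrib, Finset.sum_const, Finset.card_univ, Fintype.card_fin,
            nsmul_eq_mul]
          push_cast
          ring
        have h2 : a + (n:ℝ) * b = ((n:ℝ) + 1) + ((n:ℝ) * lm - lp) := by
          rw [ha, hb]; ring
        linarith
      have h0mem : (0 : Fin (n+1)) ∈ (Finset.univ : Finset (Fin (n+1))) := Finset.mem_univ _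
      set S := ∑ i : Fin n, y i.succ with hS
      have hsplit : ∑ i, y i = y 0 + S := by rw [Fin.sum_univ_succ]
      set z : Fin (n+1) → ℝ := fun j => if j = 0 then a else b with hz
      have hz0 : ∀ j, 0 < z j := by
        intro j
        simp only [hz]
        by_cases hj : j = 0
        · rw [if_pos hj]; exact ha0
        · rw [if_neg hj]; exact hb0
      have hbound : ∑ i, Real.log (y i) ≤ Real.log a + (n:ℝ) * Real.log b := by
        have h1 : ∑ i, Real.log (y i) ≤ ∑ i, (Real.log (z i) + (y i - z i) / z i) :=
          Finset.sum_le_sum fun i _ => log_le_lin (hz0 i) (hy0 i)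
        have hz_sum : ∑ i, Real.log (z i) = Real.log a + (n:ℝ) * Real.log b := by
          rw [Fin.sum_univ_succ]
          simp only [hz, Fin.succ_ne_zero, if_false]
          norm_num
        have hd_sum : ∑ i, (y i - z i) / z i = (y 0 - a) / a + (S - (n:ℝ) * b) / b := by
          rw [Fin.sum_univ_succ]
          simp only [hz, Fin.succ_ne_zero, if_false]
          norm_num
          rw [← Finset.sum_div, Finset.sum_sub_distrib, Finset.sum_const,
            Finset.card_univ, Fintype.card_fin, nsmul_eq_mul, hS]
        have hd0 : y 0 - a ≤ 0 := by linarith [hy0a]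
        have hdiv : (y 0 - a) / a ≤ (y 0 - a) / b := by
          rw [div_le_div_iff₀ ha0 hb0]
          nlinarith
        have hS2 : (y 0 - a) / b + (S - (n:ℝ) * b) / b = ((∑ i, y i) - (a + (n:ℝ) * b)) / b := by
          rw [hsplit]; ring
        have hneg2 : ((∑ i, y i) - (a + (n:ℝ) * b)) / b ≤ 0 :=
          div_nonpos_of_nonpos_of_nonneg (by linarith [hsum]) hb0.le
        have hneg : (y 0 - a) / a + (S - (n:ℝ) * b) / b ≤ 0 := by linarith
        calc ∑ i, Real.log (y i) ≤ ∑ i, (Real.log (z i) + (y i - z i) / z i) := h1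
          _ = (Real.log a + (n:ℝ) * Real.log b) + ((y 0 - a) / a + (S - (n:ℝ) * b) / b) := by
              rw [Finset.sum_add_distrib, hz_sum, hd_sum]
          _ ≤ Real.log a + (n:ℝ) * Real.log b := by linarith
      apply prod_sqrt_le y hy0
        (mul_nonneg (Real.sqrt_nonneg a) (pow_nonneg (Real.sqrt_nonneg b) n))
      have ht2 : (Real.sqrt a * Real.sqrt b ^ n) ^ 2 = a * b ^ n := by
        rw [mul_pow, Real.sq_sqrt ha0.le, ← pow_mul, mul_comm n 2, pow_mul, Real.sq_sqrt hb0.le]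
      have hprody : ∏ i, y i = Real.exp (∑ i, Real.log (y i)) := by
        rw [Real.exp_sum]
        exact Finset.prod_congr rfl fun i _ => (Real.exp_log (hy0 i)).symm
      rw [ht2, hprody]
      calc Real.exp (∑ i, Real.log (y i)) ≤ Real.exp (Real.log a + (n:ℝ) * Real.log b) :=
            Real.exp_le_exp.2 hbound
        _ = a * b ^ n := by
            rw [Real.exp_add, Real.exp_log ha0, Real.exp_nat_mul, Real.exp_log hb0]
    · rw [Lam, if_neg (not_le.2 hp0), if_neg (not_le.2 hcase)]
      have hga : Real.log (Real.exp 1 / p) = a := by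
        rw [Real.log_div (Real.exp_ne_zero 1) hp0.ne', Real.log_exp, ha]
      have hgb : Real.log (Real.exp 1 * m) = b := by
        rw [Real.log_mul (Real.exp_ne_zero 1) hm0.ne', Real.log_exp, hb]
      rw [hga, hgb]
      have hexp : (((n+1:ℕ):ℝ) - 1) / 2 = (n:ℝ) / 2 := by push_cast; ring
      rw [hexp, ← sqrt_pow_eq_rpow hb0.le n]
      ring
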